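/- Let M be a compact connected orientable n-dimensional C^∞ manifold with a volume form ω such that H^l(M,∂M;ℝ)=0 for all 0<l<n, and assume ∂M is diffeomorphic to S^{n-1}. Then there exists φ̄ = φ̄^{(0)}+⋯+φ̄^{(n−1)} with φ̄^{(l)} ∈ 𝒜^{n−1−l,l}(M Diff_{ω,0}(M)^δ_•) such that: (1) dφ̄ = ω̄^{(n)} + δφ̄^{(0)}; (2) φ̄^{(l)}(g₁,…,g_{n−l−1}) pulls back to 0 on ∂M for every l < n−1 and all g₁,…,g_{n−l−1} ∈ Diff_{ω,0}(M,∂M); (3) for every l < n−1, the pullback i^*φ̄^{(l)}(g₁,…,g_{n−l−1}) ∈ Ω^l(∂M) coincides with i^*φ̄^{(l)}(h₁,…,h_{n−l−1}) whenever g_k, h_k ∈ Diff_{ω,0}(M) satisfy g_k|_{∂M} = h_k|_{∂M} for all k. -/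

import Mathlib

namespace TsuboiEuler

/-! ### Group cochains valued in a graded module of differential forms

For a group `G` acting on a manifold by diffeomorphisms, `GC G F k l` models the
space `𝒜^{k,l}` of maps `G^k → Ω^l(M)`; `GCT G F` is an element of the whole double
complex, recorded in every bidegree at once. -/

section GroupCochains

variable {G : Type} [Group G] {F : ℕ → Type} [∀ l, AddCommGroup (F l)]
  [∀ l, Module ℝ (F l)]

/-- The space `𝒜^{k,l}` of `k`-cochains of the group `G` valued in `l`-forms. -/
abbrev GC (G : Type) (F : ℕ → Type) (k l : ℕ) : Type := (Fin k → G) → F l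

variable (pull : ∀ l, G → F l →ₗ[ℝ] F l)
variable (dF : ∀ l, F l →ₗ[ℝ] F (l + 1))
variable (wedge : ∀ p q r : ℕ, p + q = r → F p → F q → F r)

/-- The horizontal (inhomogeneous group-cochain) differential
`δc(g₁,…,g_{k+1}) = c(g₂,…,g_{k+1}) + ∑ (-1)^i c(g₁,…,g_i g_{i+1},…,g_{k+1})
 + (-1)^{k+1} g_{k+1}^* c(g₁,…,g_k)`. -/
def gdel (k l : ℕ) (c : GC G F k l) : GC G F (k + 1) l := fun g =>
  c (fun i => g i.succ)
    + ∑ i : Fin k,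
        ((-1 : ℝ) ^ ((i : ℕ) + 1)) •
          c (fun j =>
              if (j : ℕ) < (i : ℕ) then g (Fin.castSucc j)
              else if (j : ℕ) = (i : ℕ) then g (Fin.castSucc j) * g j.succ
              else g j.succ)
    + ((-1 : ℝ) ^ (k + 1)) • pull l (g (Fin.last k)) (c (fun j => g (Fin.castSucc j)))

/-- The vertical differential `d'' = (-1)^k d` on `𝒜^{k,l}`. -/
def dvv (k l : ℕ) (c : GC G F k l) : GC G F k (l + 1) := fun g =>
  ((-1 : ℝ) ^ k) • dF l (c g)

/-- An element of the double complex `𝒜^{*,*}`, given by all of its bidegree components. -/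
abbrev GCT (G : Type) (F : ℕ → Type) : Type := ∀ k l : ℕ, GC G F k l

/-- The horizontal differential on the total complex. -/
def Dh (c : GCT G F) : GCT G F := fun k l =>
  match k with
  | 0 => 0
  | k + 1 => gdel pull k l (c k l)

/-- The vertical differential on the total complex. -/
def Dv (c : GCT G F) : GCT G F := fun k l =>
  match l with
  | 0 => 0
  | l + 1 => dvv dF k l (c k l)

/-- The total differential `d = δ + d''`. -/
def DT (c : GCT G F) : GCT G F := Dh pull c + Dv dF c

/-- `c` is concentrated in total degree `m`. -/
def IsDeg (m : ℕ) (c : GCT G F) : Prop := ∀ k l, k + l ≠ m → c k l = 0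

/-- The wedge product
`(α∧β)(g₁,…,g_{p+r}) = (g_{p+1}⋯g_{p+r})^* α(g₁,…,g_p) ∧ β(g_{p+1},…,g_{p+r})`
of `α ∈ 𝒜^{p,q}` and `β ∈ 𝒜^{r,s}`. -/
def cwedge {p q r s k l : ℕ} (h1 : p + r = k) (h2 : q + s = l)
    (α : GC G F p q) (β : GC G F r s) : GC G F k l := fun g =>
  wedge q s l h2
    (pull q ((List.ofFn fun i : Fin r => g (Fin.cast h1 (Fin.natAdd p i))).prod)
      (α fun i => g (Fin.cast h1 (Fin.castAdd r i))))
    (β fun i => g (Fin.cast h1 (Fin.natAdd p i)))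

/-- The wedge product on the total complex. -/
def tmulC (c c' : GCT G F) : GCT G F := fun k l =>
  ∑ p ∈ (Finset.range (k + 1)).attach, ∑ q ∈ (Finset.range (l + 1)).attach,
    cwedge pull wedge
      (Nat.add_sub_cancel' (Nat.lt_succ_iff.mp (Finset.mem_range.mp p.2)))
      (Nat.add_sub_cancel' (Nat.lt_succ_iff.mp (Finset.mem_range.mp q.2)))
      (c p.1 q.1) (c' (k - p.1) (l - q.1))

end GroupCochains

/-! ### Group cohomology with trivial real coefficients -/

section RealCochains

variable {G : Type} [Group G]

/-- The inhomogeneous group-cochain differential with trivial real coefficients. -/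
def rdel (k : ℕ) (c : (Fin k → G) → ℝ) : (Fin (k + 1) → G) → ℝ := fun g =>
  c (fun i => g i.succ)
    + ∑ i : Fin k,
        ((-1 : ℝ) ^ ((i : ℕ) + 1)) •
          c (fun j =>
              if (j : ℕ) < (i : ℕ) then g (Fin.castSucc j)
              else if (j : ℕ) = (i : ℕ) then g (Fin.castSucc j) * g j.succ
              else g j.succ)
    + ((-1 : ℝ) ^ (k + 1)) • c (fun j => g (Fin.castSucc j))

/-- `u` is a coboundary of real group cochains. -/
def IsCobdryR (k : ℕ) (u : (Fin k → G) → ℝ) : Prop :=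
  ∃ (j : ℕ) (h : j + 1 = k) (w : (Fin j → G) → ℝ), u = fun g => rdel j w (g ∘ Fin.cast h)

/-- The cohomology class of the cochain `u` in `H^k(BG^δ; ℝ)` vanishes. -/
def ClassZeroR (k : ℕ) (u : (Fin k → G) → ℝ) : Prop := u = 0 ∨ IsCobdryR k u

/-- `u` and `v` represent the same class in `H^k(BG^δ; ℝ)`. -/
def CohomologousR (k : ℕ) (u v : (Fin k → G) → ℝ) : Prop := ClassZeroR k (u - v)

end RealCochains

/-! ### Abstract geometric data for `(M, ∂M ≅ S^{n-1}, ω)` together with the groups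
`Diff_{ω,0}(M)`, `Diff₀(∂M)` and `Diff_{ω,0}(M,∂M)`.

`FullGeom n` records the de Rham complexes of a compact connected oriented
`n`-manifold `M` with boundary `∂M`, the restriction `i^* : Ω^*(M) → Ω^*(∂M)`,
integration, a volume form `ω`, the group `GM` (modelling `Diff_{ω,0}(M)`), the
group `Gb` (modelling `Diff₀(∂M)`), the boundary-restriction homomorphism
`r : GM → Gb` (which is surjective: every boundary diffeomorphism extends), and the
subgroup `Grel ≤ GM` (modelling `Diff_{ω,0}(M,∂M)`), contained in the kernel of
`r`. -/

structure FullGeom (n : ℕ) where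
  /-- `Ω^l(M)` -/
  Fm : ℕ → Type
  [acg : ∀ l, AddCommGroup (Fm l)]
  [mod : ∀ l, Module ℝ (Fm l)]
  /-- exterior derivative -/
  dF : ∀ l, Fm l →ₗ[ℝ] Fm (l + 1)
  dF_dF : ∀ (l) (α : Fm l), dF (l + 1) (dF l α) = 0
  /-- wedge product -/
  wedge : ∀ p q r : ℕ, p + q = r → Fm p → Fm q → Fm r
  wedge_add_left : ∀ (p q r) (h : p + q = r) (α α' : Fm p) (β : Fm q),
    wedge p q r h (α + α') β = wedge p q r h α β + wedge p q r h α' β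
  wedge_add_right : ∀ (p q r) (h : p + q = r) (α : Fm p) (β β' : Fm q),
    wedge p q r h α (β + β') = wedge p q r h α β + wedge p q r h α β'
  wedge_smul_left : ∀ (p q r) (h : p + q = r) (a : ℝ) (α : Fm p) (β : Fm q),
    wedge p q r h (a • α) β = a • wedge p q r h α β
  wedge_smul_right : ∀ (p q r) (h : p + q = r) (a : ℝ) (α : Fm p) (β : Fm q),
    wedge p q r h α (a • β) = a • wedge p q r h α β
  wedge_comm : ∀ (p q r) (h : p + q = r) (h' : q + p = r) (α : Fm p) (β : Fm q),
    wedge p q r h α β = ((-1 : ℝ) ^ (p * q)) • wedge q p r h' β α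
  dF_wedge : ∀ (p q r) (h : p + q = r) (hp : p + 1 + q = r + 1) (hq : p + (q + 1) = r + 1)
    (α : Fm p) (β : Fm q),
    dF r (wedge p q r h α β)
      = wedge (p + 1) q (r + 1) hp (dF p α) β
        + ((-1 : ℝ) ^ p) • wedge p (q + 1) (r + 1) hq α (dF q β)
  /-- forms of degree `> n` vanish -/
  top : ∀ l, n < l → ∀ α : Fm l, α = 0
  /-- the constant function `1 ∈ Ω^0(M)` -/
  oneF : Fm 0
  dF_oneF : dF 0 oneF = 0
  oneF_wedge : ∀ (q) (α : Fm q), wedge 0 q q (Nat.zero_add q) oneF α = α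
  /-- `M` is connected: closed `0`-forms are constants -/
  connM : ∀ α : Fm 0, dF 0 α = 0 → ∃ a : ℝ, α = a • oneF
  /-- `Ω^l(∂M)` -/
  FmB : ℕ → Type
  [acgB : ∀ l, AddCommGroup (FmB l)]
  [modB : ∀ l, Module ℝ (FmB l)]
  dB : ∀ l, FmB l →ₗ[ℝ] FmB (l + 1)
  dB_dB : ∀ (l) (β : FmB l), dB (l + 1) (dB l β) = 0
  /-- restriction `i^*` to the boundary -/
  res : ∀ l, Fm l →ₗ[ℝ] FmB l
  res_dF : ∀ (l) (α : Fm l), res (l + 1) (dF l α) = dB l (res l α)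
  /-- the constant function `1 ∈ Ω^0(∂M)` -/
  oneB : FmB 0
  res_oneF : res 0 oneF = oneB
  /-- `∂M` is connected -/
  connB : ∀ β : FmB 0, dB 0 β = 0 → ∃ a : ℝ, β = a • oneB
  /-- integration of top forms over `M` -/
  intM : Fm n →ₗ[ℝ] ℝ
  /-- integration over the boundary sphere -/
  intB : ∀ l, l + 1 = n → FmB l →ₗ[ℝ] ℝ
  /-- Stokes' formula -/
  stokes : ∀ (l) (h : l + 1 = n) (α : Fm l),
    intM (cast (congrArg Fm h) (dF l α)) = intB l h (res l α)
  /-- the group `Diff_{ω,0}(M)` of volume-preserving diffeomorphisms of `M` -/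
  GM : Type
  [grpM : Group GM]
  pull : ∀ l, GM → Fm l →ₗ[ℝ] Fm l
  pull_one : ∀ (l) (α : Fm l), pull l 1 α = α
  pull_mul : ∀ (l) (g h : GM) (α : Fm l), pull l (g * h) α = pull l h (pull l g α)
  pull_dF : ∀ (l) (g : GM) (α : Fm l), dF l (pull l g α) = pull (l + 1) g (dF l α)
  pull_wedge : ∀ (p q r) (h : p + q = r) (g : GM) (α : Fm p) (β : Fm q),
    pull r g (wedge p q r h α β) = wedge p q r h (pull p g α) (pull q g β)
  pull_oneF : ∀ g : GM, pull 0 g oneF = oneF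
  intM_pull : ∀ (g : GM) (α : Fm n), intM (pull n g α) = intM α
  /-- the group `Diff₀(∂M)` of orientation-preserving diffeomorphisms of `∂M ≅ S^{n-1}` -/
  Gb : Type
  [grpB : Group Gb]
  pullB : ∀ l, Gb → FmB l →ₗ[ℝ] FmB l
  pullB_one : ∀ (l) (β : FmB l), pullB l 1 β = β
  pullB_mul : ∀ (l) (γ γ' : Gb) (β : FmB l), pullB l (γ * γ') β = pullB l γ' (pullB l γ β)
  pullB_dB : ∀ (l) (γ : Gb) (β : FmB l), dB l (pullB l γ β) = pullB (l + 1) γ (dB l β)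
  pullB_oneB : ∀ γ : Gb, pullB 0 γ oneB = oneB
  intB_pullB : ∀ (l) (h : l + 1 = n) (γ : Gb) (β : FmB l),
    intB l h (pullB l γ β) = intB l h β
  /-- restriction of diffeomorphisms to the boundary -/
  rHom : GM →* Gb
  /-- every orientation-preserving diffeomorphism of `∂M` extends to `M` -/
  rHom_surj : Function.Surjective rHom
  res_pull : ∀ (l) (g : GM) (α : Fm l), res l (pull l g α) = pullB l (rHom g) (res l α)
  /-- the subgroup `Diff_{ω,0}(M,∂M)` of diffeomorphisms fixing `∂M` pointwise -/
  Grel : Subgroup GM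
  rHom_Grel : ∀ g ∈ Grel, rHom g = 1
  /-- the volume form `ω` -/
  ωM : Fm n
  pull_ωM : ∀ g : GM, pull n g ωM = ωM
  vol_pos : 0 < intM ωM

attribute [instance] FullGeom.acg FullGeom.mod FullGeom.acgB FullGeom.modB
  FullGeom.grpM FullGeom.grpB

namespace FullGeom

variable {n : ℕ} (D : FullGeom n)

/-- The action of the subgroup `Diff_{ω,0}(M,∂M)` on forms. -/
def pullRel : ∀ l, D.Grel → D.Fm l →ₗ[ℝ] D.Fm l := fun l g => D.pull l (g : D.GM)

/-- `ω^{(n)}` as an element of the double complex of `Diff_{ω,0}(M)`-cochains. -/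
def omCM : GCT D.GM D.Fm := fun k l _ =>
  if h : k = 0 ∧ l = n then cast (congrArg D.Fm h.2.symm) D.ωM else 0

/-- `ω^{(n)}` as an element of the double complex of `Diff_{ω,0}(M,∂M)`-cochains. -/
def omCRel : GCT D.Grel D.Fm := fun k l _ =>
  if h : k = 0 ∧ l = n then cast (congrArg D.Fm h.2.symm) D.ωM else 0

/-- `φ` is as in the definition of `c(M)`: total degree `n-1`, `dφ = ω^{(n)}`, and
components of form degree `≤ n-2` pull back to `0` on `∂M`. -/
def AdmissibleRel (φ : GCT D.Grel D.Fm) : Prop :=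
  IsDeg (n - 1) φ ∧ DT D.pullRel D.dF φ = D.omCRel ∧
    ∀ k l, l + 2 ≤ n → ∀ g : Fin k → D.Grel, D.res l (φ k l g) = 0

/-- The cocycle `(g₁,…,g_{n-1}) ↦ ∫_M φ^{(0)}(g₁,…,g_{n-1}) ∧ ω` representing
`c(M)`. -/
def uRel (φ : GCT D.Grel D.Fm) : (Fin (n - 1) → D.Grel) → ℝ := fun g =>
  D.intM (D.wedge 0 n n (Nat.zero_add n) (φ (n - 1) 0 g) D.ωM)

/-- Conditions (1)–(3) of Lemma 5.1 on `φ̄ ∈ 𝒜^{n-1}(M Diff_{ω,0}(M)^δ_•)`: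
(1) `dφ̄ = ω̄^{(n)} + δφ̄^{(0)}`;
(2) `φ̄^{(l)}(g₁,…,g_{n-l-1})` pulls back to `0` on `∂M` for `l < n-1` whenever all
`gᵢ ∈ Diff_{ω,0}(M,∂M)`;
(3) for `l < n-1`, `i^* φ̄^{(l)}(g₁,…,g_{n-l-1})` only depends on the restrictions
`gᵢ|_{∂M}`. -/
def BarPhi (φb : GCT D.GM D.Fm) : Prop :=
  IsDeg (n - 1) φb ∧
  DT D.pull D.dF φb
      = D.omCM + (fun k l => if k = n ∧ l = 0 then Dh D.pull φb k l else 0) ∧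
  (∀ k l, l + 2 ≤ n → ∀ g : Fin k → D.GM, (∀ i, g i ∈ D.Grel) →
      D.res l (φb k l g) = 0) ∧
  (∀ k l, l + 2 ≤ n → ∀ g h : Fin k → D.GM, (∀ i, D.rHom (g i) = D.rHom (h i)) →
      D.res l (φb k l g) = D.res l (φb k l h))

/-- The cochain `u = ∫_M φ̄^{(0)} ∧ ω̄^{(n)}` on `Diff_{ω,0}(M)`. -/
def uBar (φb : GCT D.GM D.Fm) : (Fin (n - 1) → D.GM) → ℝ := fun g =>
  D.intM (D.wedge 0 n n (Nat.zero_add n) (φb (n - 1) 0 g) D.ωM)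

/-- `χ` is the `n`-cochain of `Diff₀(∂M)` with `r^*χ = δφ̄^{(0)}`; here
`δφ̄^{(0)}(g₁,…,g_n)` is a constant function on `M` and `r^*χ = δφ̄^{(0)}` means
that this constant equals `χ(g₁|_{∂M},…,g_n|_{∂M})`. -/
def IsChi (φb : GCT D.GM D.Fm) (χ : (Fin n → D.Gb) → ℝ) : Prop :=
  ∀ g : Fin n → D.GM, Dh D.pull φb n 0 g = χ (fun i => D.rHom (g i)) • D.oneF

/-- A zig-zag `ψ̄ = ψ̄^{(0)} + ⋯ + ψ̄^{(n-1)}` in the double complex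
`𝒜^{*,*}(S^{n-1} Diff₀(S^{n-1})^δ_•)` starting from a closed `(n-1)`-form
`ψ̄^{(n-1)} ∈ Ω^{n-1}(S^{n-1})` of total integral `1`, i.e. representing the
generator `α ∈ E_n^{0,n-1} ≅ H^{n-1}(S^{n-1})`; by definition of the Euler class
`[−δψ̄^{(0)}] = e` (since `d_n(α) = [δψ̄^{(0)}]` and `e = −d_n(α)`). -/
def UnitZigZag (ψ : GCT D.Gb D.FmB) : Prop :=
  IsDeg (n - 1) ψ ∧ (∀ k l, 1 ≤ l → DT D.pullB D.dB ψ k l = 0) ∧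
    ∀ h : n - 1 + 1 = n, D.intB (n - 1) h (ψ 0 (n - 1) Fin.elim0) = 1

/-- `w` is a real `n`-cocycle of `Diff₀(S^{n-1})` with `δψ̄^{(0)} = w · 1` for a unit
zig-zag `ψ̄`; by the spectral-sequence definition of the Euler class of foliated
`S^{n-1}`-bundles, the class of `-w` equals the Euler class `e`. -/
def EulerFrom (ψ : GCT D.Gb D.FmB) (w : (Fin n → D.Gb) → ℝ) : Prop :=
  D.UnitZigZag ψ ∧ ∀ g : Fin n → D.Gb, Dh D.pullB ψ n 0 g = w g • D.oneB

/-- `H^l(M,∂M;ℝ) = 0` for `0 < l < n` and `H^0(M,∂M;ℝ) = 0`. -/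
def RelAcyclic : Prop :=
  (∀ α : D.Fm 0, D.dF 0 α = 0 → D.res 0 α = 0 → α = 0) ∧
    ∀ l, l + 1 < n → ∀ α : D.Fm (l + 1), D.dF (l + 1) α = 0 → D.res (l + 1) α = 0 →
      ∃ β : D.Fm l, D.res l β = 0 ∧ D.dF l β = α

/-- `H^l(M;ℝ) = 0` for `0 < l < n`, and `H^n(M;ℝ) = 0` (so that `ω` is exact);
these follow from `H^l(M,∂M;ℝ) = 0` and `∂M ≅ S^{n-1}`. -/
def AbsAcyclic : Prop :=
  (∀ l, l + 1 < n → ∀ α : D.Fm (l + 1), D.dF (l + 1) α = 0 →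
      ∃ β : D.Fm l, D.dF l β = α) ∧
    ∃ β : D.Fm (n - 1), ∀ h : n - 1 + 1 = n,
      cast (congrArg D.Fm h) (D.dF (n - 1) β) = D.ωM

/-- The boundary is the sphere `S^{n-1}`: `H^l(∂M;ℝ) = 0` for `0 < l < n-1`. -/
def SphereBoundary : Prop :=
  ∀ l, l + 2 < n → ∀ β : D.FmB (l + 1), D.dB (l + 1) β = 0 →
    ∃ γ : D.FmB l, D.dB l γ = β

/-- `i^* : Ω^l(M) → Ω^l(∂M)` is surjective. -/
def ResSurj : Prop := ∀ l, Function.Surjective (D.res l)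

end FullGeom


/-! ### Auxiliary machinery for the proof of `exists_bar_phi` -/

section DelSq

variable {G : Type} [Group G] {F : ℕ → Type} [∀ l, AddCommGroup (F l)]
  [∀ l, Module ℝ (F l)]

/-- Sum reversal over `Fin`. -/
lemma fin_sum_rev {M : Type*} [AddCommMonoid M] {k : ℕ} (f : Fin k → M) :
    ∑ i, f i = ∑ i : Fin k, f i.rev :=
  Fintype.sum_equiv Fin.revPerm f (fun i => f i.rev)
    (fun x => by simp [Fin.rev_rev])

lemma neg_one_pow_congr {a b : ℕ} (h : a % 2 = b % 2) : ((-1 : ℝ)) ^ a = (-1) ^ b := by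
  rcases Nat.even_or_odd a with ha | ha
  · rw [ha.neg_one_pow,
      (Nat.even_iff.2 (by rw [← h]; exact Nat.even_iff.1 ha)).neg_one_pow]
  · rw [ha.neg_one_pow,
      (Nat.odd_iff.2 (by rw [← h]; exact Nat.odd_iff.1 ha)).neg_one_pow]

variable (pull : ∀ l, G → F l →ₗ[ℝ] F l)

/-- `δ ∘ δ = 0` for the inhomogeneous group-cochain differential with pullback
(right) action, via Mathlib's group cohomology for the opposite group. -/
theorem gdel_gdel (l : ℕ) (hone : ∀ α : F l, pull l 1 α = α)
    (hmul : ∀ (g h : G) (α : F l), pull l (g * h) α = pull l h (pull l g α))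
    (k : ℕ) (c : GC G F k l) :
    gdel pull (k + 1) l (gdel pull k l c) = 0 := by
  classical
  let ρ : Representation ℝ Gᵐᵒᵖ (F l) :=
    { toFun := fun g => pull l g.unop
      map_one' := LinearMap.ext fun v => hone v
      map_mul' := fun x y => LinearMap.ext fun v => by
        simp only [MulOpposite.unop_mul, Module.End.mul_apply]
        exact hmul _ _ v }
  let A : Rep ℝ Gᵐᵒᵖ := Rep.of ρ
  let hatF : ∀ j : ℕ, ((Fin j → G) → F l) → ((Fin j → Gᵐᵒᵖ) → A) :=
    fun j c => fun hh => c fun i => (hh i.rev).unop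
  have key : ∀ (j : ℕ) (c : (Fin j → G) → F l),
      inhomogeneousCochains.d A j (hatF j c)
        = ((-1 : ℝ)) ^ (j + 1) • hatF (j + 1) (gdel pull j l c) := by
    intro j c
    funext h
    show pull l ((h 0).unop) (c fun i => (h i.rev.succ).unop)
        + (∑ p : Fin (j + 1), (-1 : ℝ) ^ ((p : ℕ) + 1) •
            c fun i => ((Fin.contractNth p (· * ·) h) i.rev).unop)
        = ((-1 : ℝ)) ^ (j + 1) • gdel pull j l c (fun i => (h i.rev).unop)
    set g : Fin (j + 1) → G := fun i => (h i.rev).unop with hg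
    have hgl : ∀ x : Fin (j + 1), (h x).unop = g x.rev := by
      intro x
      show (h x).unop = (h x.rev.rev).unop
      rw [Fin.rev_rev]
    -- the ρ-term
    have T0 : pull l ((h 0).unop) (c fun i => (h i.rev.succ).unop)
        = pull l (g (Fin.last j)) (c fun i => g i.castSucc) := by
      have e1 : (Fin.rev (0 : Fin (j + 1))) = Fin.last j := by
        rw [← Fin.rev_last, Fin.rev_rev]
      have harg : (fun i : Fin j => (h i.rev.succ).unop) = fun i => g i.castSucc :=
        funext fun i => by rw [hgl (i.rev.succ), Fin.rev_succ, Fin.rev_rev]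
      rw [hgl 0, e1, harg]
    -- the last term of the contraction sum
    have TL : (c fun i => ((Fin.contractNth (Fin.last j) (· * ·) h) i.rev).unop)
        = c fun i => g i.succ := by
      have harg : (fun i : Fin j => ((Fin.contractNth (Fin.last j) (· * ·) h) i.rev).unop)
          = fun i => g i.succ := by
        funext i
        rw [Fin.contractNth_apply_of_lt _ _ _ _
          (by rw [Fin.val_last]; exact i.rev.isLt)]
        rw [hgl (Fin.castSucc i.rev), Fin.rev_castSucc, Fin.rev_rev]
      rw [harg]
    -- the middle terms
    have TM : ∀ p : Fin j,
        (c fun i => ((Fin.contractNth (Fin.castSucc p) (· * ·) h) i.rev).unop)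
          = c fun t =>
              if (t : ℕ) < ((p.rev : Fin j) : ℕ) then g (Fin.castSucc t)
              else if (t : ℕ) = ((p.rev : Fin j) : ℕ) then
                g (Fin.castSucc t) * g t.succ
              else g t.succ := by
      intro p
      refine congrArg c (funext fun t => ?_)
      have hpv : ((p.rev : Fin j) : ℕ) = j - (p + 1) := Fin.val_rev p
      have htv : ((t.rev : Fin j) : ℕ) = j - (t + 1) := Fin.val_rev t
      rcases lt_trichotomy ((t : ℕ)) ((p.rev : Fin j) : ℕ) with ht | ht | ht
      · rw [if_pos ht]
        rw [Fin.contractNth_apply_of_gt _ _ _ _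
          (by rw [Fin.coe_castSucc, htv]; omega)]
        simp only [hgl, MulOpposite.unop_mul, Fin.rev_succ, Fin.rev_castSucc,
          Fin.rev_rev]
      · rw [if_neg (by omega), if_pos ht]
        rw [Fin.contractNth_apply_of_eq _ _ _ _
          (by rw [Fin.coe_castSucc, htv]; omega)]
        simp only [hgl, MulOpposite.unop_mul, Fin.rev_succ, Fin.rev_castSucc,
          Fin.rev_rev]
      · rw [if_neg (by omega), if_neg (by omega)]
        rw [Fin.contractNth_apply_of_lt _ _ _ _
          (by rw [Fin.coe_castSucc, htv]; omega)]
        simp only [hgl, MulOpposite.unop_mul, Fin.rev_succ, Fin.rev_castSucc,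
          Fin.rev_rev]
    -- expand the right hand side
    have hG : gdel pull j l c g
        = c (fun i => g i.succ)
          + (∑ i : Fin j, ((-1 : ℝ)) ^ ((i : ℕ) + 1) •
              c (fun t =>
                if (t : ℕ) < (i : ℕ) then g (Fin.castSucc t)
                else if (t : ℕ) = (i : ℕ) then g (Fin.castSucc t) * g t.succ
                else g t.succ))
          + ((-1 : ℝ)) ^ (j + 1) •
              pull l (g (Fin.last j)) (c fun t => g (Fin.castSucc t)) := rfl
    rw [hG]
    rw [smul_add, smul_add, smul_smul, ← pow_add]
    have epow : ((-1 : ℝ)) ^ (j + 1 + (j + 1)) = 1 :=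
      Even.neg_one_pow ⟨j + 1, by ring⟩
    rw [epow, one_smul]
    -- reindex the middle sum on the right
    rw [Finset.smul_sum]
    rw [fin_sum_rev (fun i : Fin j => ((-1 : ℝ)) ^ (j + 1) •
      (((-1 : ℝ)) ^ ((i : ℕ) + 1) • c fun t =>
        if (t : ℕ) < (i : ℕ) then g (Fin.castSucc t)
        else if (t : ℕ) = (i : ℕ) then g (Fin.castSucc t) * g t.succ
        else g t.succ))]
    -- split the left sum
    rw [Fin.sum_univ_castSucc (f := fun p : Fin (j + 1) =>
      (-1 : ℝ) ^ ((p : ℕ) + 1) •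
        (c fun i => ((Fin.contractNth p (· * ·) h) i.rev).unop))]
    rw [T0, TL, Fin.val_last]
    have TMsum : ∑ p : Fin j, (-1 : ℝ) ^ (((Fin.castSucc p : Fin (j + 1)) : ℕ) + 1) •
        (c fun i => ((Fin.contractNth (Fin.castSucc p) (· * ·) h) i.rev).unop)
        = ∑ p : Fin j, ((-1 : ℝ)) ^ (j + 1) •
          (((-1 : ℝ)) ^ (((p.rev : Fin j) : ℕ) + 1) • c fun t =>
            if (t : ℕ) < ((p.rev : Fin j) : ℕ) then g (Fin.castSucc t)
            else if (t : ℕ) = ((p.rev : Fin j) : ℕ) then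
              g (Fin.castSucc t) * g t.succ
            else g t.succ) := by
      refine Finset.sum_congr rfl fun p _ => ?_
      rw [TM p, smul_smul, ← pow_add, Fin.coe_castSucc]
      have hpv : ((p.rev : Fin j) : ℕ) = j - (p + 1) := Fin.val_rev p
      rw [neg_one_pow_congr (a := (p : ℕ) + 1)
        (b := j + 1 + (((p.rev : Fin j) : ℕ) + 1))
        (by rw [hpv]; have := p.isLt; omega)]
    rw [TMsum]
    abel
  -- injectivity of the reversal
  have hinj : ∀ (j : ℕ) (u : (Fin j → G) → F l), hatF j u = 0 → u = 0 := by
    intro j u hu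
    funext g0
    have h2 := congrFun hu (fun i => MulOpposite.op (g0 i.rev))
    have h3 : u (fun i => g0 i.rev.rev) = 0 := h2
    simp only [Fin.rev_rev] at h3
    exact h3
  -- d ∘ d = 0 from Mathlib
  have hdd := groupCohomology.inhomogeneousCochains.d_comp_d (n := k) (A := A)
  have h1 : inhomogeneousCochains.d A (k + 1)
      (inhomogeneousCochains.d A k (hatF k c)) = 0 := by
    have := congrArg (fun f => f (hatF k c)) hdd
    simpa using this
  rw [key k c, map_smul, key (k + 1) (gdel pull k l c), smul_smul, ← pow_add] at h1
  have hodd : ((-1 : ℝ)) ^ (k + 1 + (k + 1 + 1)) = -1 :=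
    Odd.neg_one_pow ⟨k + 1, by ring⟩
  rw [hodd, neg_smul, neg_eq_zero, one_smul] at h1
  exact hinj _ _ h1

end DelSq

section GdelAux

variable {G : Type} [Group G] {F : ℕ → Type} [∀ l, AddCommGroup (F l)]
  [∀ l, Module ℝ (F l)] (pull : ∀ l, G → F l →ₗ[ℝ] F l)

lemma gdel_zero (k l : ℕ) : gdel pull k l (0 : GC G F k l) = 0 := by
  funext g
  simp [gdel]

omit [Group G] in
lemma dvv_zero (dF : ∀ l, F l →ₗ[ℝ] F (l + 1)) (k l : ℕ) :
    dvv (G := G) (F := F) dF k l 0 = 0 := by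
  funext g
  simp [dvv]

lemma gdel_smul (k l : ℕ) (a : ℝ) (c : GC G F k l) :
    gdel pull k l (fun g => a • c g) = fun g => a • gdel pull k l c g := by
  funext g
  simp only [gdel, map_smul, smul_add, Finset.smul_sum, smul_comm a]

lemma gdel_cast {l₁ l₂ : ℕ} (e : l₁ = l₂) (k : ℕ) (c : GC G F k l₁) :
    gdel pull k l₂ (fun g => cast (congrArg F e) (c g))
      = fun g => cast (congrArg F e) (gdel pull k l₁ c g) := by
  cases e; rfl

end GdelAux

namespace FullGeom

variable {n : ℕ} {m : ℕ} (D : FullGeom n)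

lemma fcast_zero {a b : ℕ} (e : a = b) :
    cast (congrArg D.Fm e) (0 : D.Fm a) = 0 := by cases e; rfl

lemma fcast_smul {a b : ℕ} (e : a = b) (r : ℝ) (x : D.Fm a) :
    cast (congrArg D.Fm e) (r • x) = r • cast (congrArg D.Fm e) x := by cases e; rfl

lemma bcast_zero {a b : ℕ} (e : a = b) :
    cast (congrArg D.FmB e) (0 : D.FmB a) = 0 := by cases e; rfl

lemma bcast_smul {a b : ℕ} (e : a = b) (r : ℝ) (x : D.FmB a) :
    cast (congrArg D.FmB e) (r • x) = r • cast (congrArg D.FmB e) x := by cases e; rfl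

lemma bcast_eq_zero_iff {a b : ℕ} (e : a = b) (x : D.FmB a) :
    cast (congrArg D.FmB e) x = 0 ↔ x = 0 := by cases e; rfl

lemma res_cast {a b : ℕ} (e : a = b) (x : D.Fm a) :
    D.res b (cast (congrArg D.Fm e) x) = cast (congrArg D.FmB e) (D.res a x) := by
  cases e; rfl

lemma dF_cast {a b : ℕ} (e : a = b) (e2 : a + 1 = b + 1) (x : D.Fm a) :
    D.dF b (cast (congrArg D.Fm e) x)
      = cast (congrArg D.Fm e2) (D.dF a x) := by
  cases e; exact (eq_of_heq (cast_heq _ _)).symm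

lemma gdel_dF (k l : ℕ) (c : GC D.GM D.Fm k l) (g : Fin (k + 1) → D.GM) :
    D.dF l (gdel D.pull k l c g) = gdel D.pull k (l + 1) (fun t => D.dF l (c t)) g := by
  simp only [gdel, map_add, map_sum, map_smul, D.pull_dF]

lemma res_gdel_dep (k l : ℕ) (c : GC D.GM D.Fm k l)
    (hdep : ∀ g g' : Fin k → D.GM, (∀ i, D.rHom (g i) = D.rHom (g' i)) →
      D.res l (c g) = D.res l (c g'))
    (g g' : Fin (k + 1) → D.GM) (hgg : ∀ i, D.rHom (g i) = D.rHom (g' i)) :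
    D.res l (gdel D.pull k l c g) = D.res l (gdel D.pull k l c g') := by
  simp only [gdel, map_add, map_sum, map_smul, D.res_pull]
  congr 1
  · congr 1
    · exact hdep _ _ fun i => hgg i.succ
    · refine Finset.sum_congr rfl fun i _ => ?_
      congr 1
      refine hdep _ _ fun t => ?_
      split_ifs
      · exact hgg _
      · rw [map_mul, map_mul, hgg, hgg]
      · exact hgg _
  · rw [hgg (Fin.last k), hdep (fun t => g (Fin.castSucc t))
      (fun t => g' (Fin.castSucc t)) (fun t => hgg _)]

lemma res_gdel_van (k l : ℕ) (c : GC D.GM D.Fm k l)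
    (hvan : ∀ g : Fin k → D.GM, (∀ i, D.rHom (g i) = 1) → D.res l (c g) = 0)
    (g : Fin (k + 1) → D.GM) (hg : ∀ i, D.rHom (g i) = 1) :
    D.res l (gdel D.pull k l c g) = 0 := by
  simp only [gdel, map_add, map_sum, map_smul, D.res_pull]
  have hmid : ∀ i : Fin k, D.res l (c fun t =>
      if (t : ℕ) < (i : ℕ) then g (Fin.castSucc t)
      else if (t : ℕ) = (i : ℕ) then g (Fin.castSucc t) * g t.succ
      else g t.succ) = 0 := by
    intro i
    refine hvan _ fun t => ?_
    split_ifs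
    · exact hg _
    · rw [map_mul, hg, hg, one_mul]
    · exact hg _
  rw [hvan _ fun i => hg i.succ, hvan _ fun t => hg _]
  rw [Finset.sum_eq_zero fun i _ => by rw [hmid i, smul_zero]]
  simp

/-- The vanishing of the restriction of `δc` on tuples restricting to the identity,
including the `k = 0` case where no vanishing hypothesis on `c` is available. -/
lemma res_gdel_van' (k l : ℕ) (c : GC D.GM D.Fm k l)
    (hvan : 1 ≤ k → ∀ g : Fin k → D.GM, (∀ i, D.rHom (g i) = 1) → D.res l (c g) = 0)
    (g : Fin (k + 1) → D.GM) (hg : ∀ i, D.rHom (g i) = 1) :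
    D.res l (gdel D.pull k l c g) = 0 := by
  rcases Nat.eq_zero_or_pos k with hk | hk
  · subst hk
    simp only [gdel, map_add, map_sum, map_smul, D.res_pull]
    have h2 : (fun i : Fin 0 => g i.succ) = fun i : Fin 0 => g (Fin.castSucc i) :=
      funext fun i => i.elim0
    rw [h2, hg (Fin.last 0), D.pullB_one]
    simp
  · exact D.res_gdel_van k l c (hvan hk) g hg

/-- The "good extension" property in the inductive construction of `φ`. -/
def SGood {m : ℕ} (D : FullGeom (m + 1)) (j : ℕ) (cj : GC D.GM D.Fm j (m - j))
    (c' : GC D.GM D.Fm (j + 1) (m - (j + 1))) : Prop :=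
  (∀ (e : m - (j + 1) + 1 = m - j) (g : Fin (j + 1) → D.GM),
      cast (congrArg D.Fm e) (D.dF (m - (j + 1)) (c' g))
        = ((-1 : ℝ)) ^ j • gdel D.pull j (m - j) cj g)
    ∧ (∀ g g' : Fin (j + 1) → D.GM, (∀ i, D.rHom (g i) = D.rHom (g' i)) →
        D.res (m - (j + 1)) (c' g) = D.res (m - (j + 1)) (c' g'))
    ∧ (∀ g : Fin (j + 1) → D.GM, (∀ i, D.rHom (g i) = 1) →
        D.res (m - (j + 1)) (c' g) = 0)

/-- The key analytic step: primitives with controlled boundary restriction. -/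
lemma step_exists {m : ℕ} (D : FullGeom (m + 1))
    (hrel : D.RelAcyclic) (habs : D.AbsAcyclic)
    (j : ℕ) (hj : j < m) (cj : GC D.GM D.Fm j (m - j))
    (hclosed : ∀ g : Fin (j + 1) → D.GM,
      D.dF (m - j) (gdel D.pull j (m - j) cj g) = 0)
    (hdep : ∀ g g' : Fin j → D.GM, (∀ i, D.rHom (g i) = D.rHom (g' i)) →
      D.res (m - j) (cj g) = D.res (m - j) (cj g'))
    (hvan : 1 ≤ j → ∀ g : Fin j → D.GM, (∀ i, D.rHom (g i) = 1) →
      D.res (m - j) (cj g) = 0) :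
    ∃ c', SGood D j cj c' := by
  classical
  have e : m - (j + 1) + 1 = m - j := by omega
  have hl : m - (j + 1) + 1 < m + 1 := by omega
  -- the lifted cochain ψ
  set Ψ : (Fin (j + 1) → D.GM) → D.Fm (m - (j + 1) + 1) := fun g =>
    cast (congrArg D.Fm e.symm) (((-1 : ℝ)) ^ j • gdel D.pull j (m - j) cj g) with hΨ
  have hΨclosed : ∀ g, D.dF (m - (j + 1) + 1) (Ψ g) = 0 := by
    intro g
    rw [hΨ]
    dsimp only
    rw [D.dF_cast e.symm (by omega), map_smul, hclosed g, smul_zero,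
      D.fcast_zero (by omega : m - j + 1 = m - (j + 1) + 1 + 1)]
  have hΨdep : ∀ g g', (∀ i, D.rHom (g i) = D.rHom (g' i)) →
      D.res (m - (j + 1) + 1) (Ψ g) = D.res (m - (j + 1) + 1) (Ψ g') := by
    intro g g' hgg
    rw [hΨ]
    dsimp only
    rw [D.res_cast e.symm, D.res_cast e.symm, map_smul, map_smul,
      D.res_gdel_dep j (m - j) cj hdep g g' hgg]
  have hΨvan : ∀ g, (∀ i, D.rHom (g i) = 1) → D.res (m - (j + 1) + 1) (Ψ g) = 0 := by
    intro g hg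
    rw [hΨ]
    dsimp only
    rw [D.res_cast e.symm, map_smul, D.res_gdel_van' j (m - j) cj hvan g hg,
      smul_zero, D.bcast_zero e.symm]
  -- a section of the boundary restriction homomorphism
  obtain ⟨σ, hσ, hσ1⟩ : ∃ σ : D.Gb → D.GM, (∀ γ, D.rHom (σ γ) = γ) ∧ σ 1 = 1 := by
    choose f hf using D.rHom_surj
    refine ⟨fun γ => if γ = 1 then 1 else f γ, fun γ => ?_, by simp⟩
    by_cases h : γ = 1
    · simp [h, map_one]
    · simp [h, hf]
  -- boundary-controlled primitives over the boundary data
  have hηex : ∀ γ : Fin (j + 1) → D.Gb, ∃ η : D.Fm (m - (j + 1)),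
      D.dF (m - (j + 1)) η = Ψ (fun i => σ (γ i))
        ∧ ((∀ i, γ i = 1) → D.res (m - (j + 1)) η = 0) := by
    intro γ
    by_cases hγ : ∀ i, γ i = 1
    · have hone : ∀ i, D.rHom (σ (γ i)) = 1 := fun i => by rw [hγ i, hσ1, map_one]
      obtain ⟨η, hres, hd⟩ := hrel.2 (m - (j + 1)) (by omega) (Ψ fun i => σ (γ i))
        (hΨclosed _) (hΨvan _ hone)
      exact ⟨η, hd, fun _ => hres⟩
    · obtain ⟨η, hd⟩ := habs.1 (m - (j + 1)) (by omega) (Ψ fun i => σ (γ i))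
        (hΨclosed _)
      exact ⟨η, hd, fun h => absurd h hγ⟩
  choose η hηd hηres using hηex
  -- relative primitives of the difference
  have hθex : ∀ g : Fin (j + 1) → D.GM, ∃ θ : D.Fm (m - (j + 1)),
      D.res (m - (j + 1)) θ = 0
        ∧ D.dF (m - (j + 1)) θ = Ψ g - Ψ (fun i => σ (D.rHom (g i))) := by
    intro g
    refine hrel.2 (m - (j + 1)) (by omega) _ ?_ ?_
    · rw [map_sub, hΨclosed, hΨclosed, sub_zero]
    · rw [map_sub, hΨdep g (fun i => σ (D.rHom (g i))) (fun i => (hσ _).symm), sub_self]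
  choose θ hθres hθd using hθex
  refine ⟨fun g => η (fun i => D.rHom (g i)) + θ g, ?_, ?_, ?_⟩
  · intro e' g
    rw [map_add, hηd, hθd]
    have hb : (fun i => σ ((fun t => D.rHom (g t)) i)) = fun i => σ (D.rHom (g i)) := rfl
    rw [hb, add_sub_cancel, hΨ]
    dsimp only
    rw [cast_cast]
    exact eq_of_heq (cast_heq _ _)
  · intro g g' hgg
    rw [map_add, map_add, hθres, hθres, add_zero, add_zero]
    have hb : (fun i => D.rHom (g i)) = fun i => D.rHom (g' i) := funext hgg
    rw [hb]
  · intro g hg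
    rw [map_add, hθres, add_zero]
    exact hηres _ fun i => hg i

open Classical in
/-- The chain `φ^{(m)}, φ^{(m-1)}, …` as a function of the cochain degree. -/
noncomputable def chainC {m : ℕ} (D : FullGeom (m + 1)) (β : D.Fm m) :
    ∀ k : ℕ, GC D.GM D.Fm k (m - k) := fun k =>
  Nat.rec (motive := fun k => GC D.GM D.Fm k (m - k)) (fun _ => β)
    (fun j cj => if h : ∃ c', SGood D j cj c' then h.choose else 0) k

open Classical in
lemma chainC_succ {m : ℕ} (D : FullGeom (m + 1)) (β : D.Fm m) (j : ℕ) :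
    chainC D β (j + 1)
      = if h : ∃ c', SGood D j (chainC D β j) c' then h.choose else 0 := rfl

/-- All the inductive invariants of the chain. -/
lemma chain_inv {m : ℕ} (D : FullGeom (m + 1))
    (hrel : D.RelAcyclic) (habs : D.AbsAcyclic)
    (β : D.Fm m) (hβ : D.dF m β = D.ωM) :
    ∀ k : ℕ, k ≤ m →
      (∀ g : Fin (k + 1) → D.GM,
          D.dF (m - k) (gdel D.pull k (m - k) (chainC D β k) g) = 0)
        ∧ (∀ g g' : Fin k → D.GM, (∀ i, D.rHom (g i) = D.rHom (g' i)) →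
            D.res (m - k) (chainC D β k g) = D.res (m - k) (chainC D β k g'))
        ∧ (1 ≤ k → ∀ g : Fin k → D.GM, (∀ i, D.rHom (g i) = 1) →
            D.res (m - k) (chainC D β k g) = 0)
        ∧ (k < m → SGood D k (chainC D β k) (chainC D β (k + 1))) := by
  intro k
  induction k with
  | zero =>
    intro _
    have hc0 : ∀ g : Fin 0 → D.GM, chainC D β 0 g = β := fun _ => rfl
    have hclosed : ∀ g : Fin 1 → D.GM,
        D.dF (m - 0) (gdel D.pull 0 (m - 0) (chainC D β 0) g) = 0 := by
      intro g
      show D.dF m (gdel D.pull 0 m (chainC D β 0) g) = 0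
      have h1 : gdel D.pull 0 m (chainC D β 0) g
          = β + ((-1 : ℝ)) ^ (0 + 1) • D.pull m (g (Fin.last 0)) β := by
        simp [gdel, hc0]
      rw [h1, map_add, map_smul, D.pull_dF, hβ, D.pull_ωM]
      simp
    have hdep : ∀ g g' : Fin 0 → D.GM, (∀ i, D.rHom (g i) = D.rHom (g' i)) →
        D.res (m - 0) (chainC D β 0 g) = D.res (m - 0) (chainC D β 0 g') := by
      intro g g' _
      rw [hc0, hc0]
    refine ⟨hclosed, hdep, fun h => absurd h (by omega), fun hm => ?_⟩
    rw [chainC_succ]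
    have hex := D.step_exists hrel habs 0 hm (chainC D β 0) hclosed hdep
      (fun h => absurd h (by omega))
    rw [dif_pos hex]
    exact hex.choose_spec
  | succ j ih =>
    intro hk
    obtain ⟨ihclosed, ihdep, ihvan, ihlink⟩ := ih (by omega)
    have hlink := ihlink (by omega)
    have e : m - (j + 1) + 1 = m - j := by omega
    have hdep' := hlink.2.1
    have hvan' := hlink.2.2
    have hclosed' : ∀ g : Fin (j + 2) → D.GM,
        D.dF (m - (j + 1)) (gdel D.pull (j + 1) (m - (j + 1)) (chainC D β (j + 1)) g)
          = 0 := by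
      intro g
      rw [D.gdel_dF]
      have hlk : ∀ t, D.dF (m - (j + 1)) (chainC D β (j + 1) t)
          = cast (congrArg D.Fm e.symm)
              (((-1 : ℝ)) ^ j • gdel D.pull j (m - j) (chainC D β j) t) := by
        intro t
        rw [← hlink.1 e t, cast_cast]
        exact (eq_of_heq (cast_heq _ _)).symm
      rw [funext hlk]
      rw [gdel_cast D.pull e.symm (j + 1)
        (fun t => ((-1 : ℝ)) ^ j • gdel D.pull j (m - j) (chainC D β j) t)]
      rw [gdel_smul D.pull (j + 1) (m - j) ((-1 : ℝ) ^ j)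
        (gdel D.pull j (m - j) (chainC D β j))]
      rw [gdel_gdel D.pull (m - j) (D.pull_one (m - j)) (D.pull_mul (m - j)) j
        (chainC D β j)]
      simp only [Pi.zero_apply, smul_zero]
      exact D.fcast_zero e.symm
    refine ⟨hclosed', hdep', fun _ => hvan', fun hm => ?_⟩
    rw [chainC_succ D β (j + 1)]
    have hex := D.step_exists hrel habs (j + 1) hm (chainC D β (j + 1)) hclosed'
      hdep' (fun _ => hvan')
    rw [dif_pos hex]
    exact hex.choose_spec

end FullGeom

/-! ### STATEMENT 10 (Lemma 5.1)

Let `M` be a compact connected orientable `n`-manifold with volume form `ω`,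
`H^l(M,∂M;ℝ) = 0` for `0 < l < n`, and `∂M ≅ S^{n-1}`.  Then there exists
`φ̄ = φ̄^{(0)} + ⋯ + φ̄^{(n-1)}` with `φ̄^{(l)} ∈ 𝒜^{n-1-l,l}(M Diff_{ω,0}(M)^δ_•)`
satisfying conditions (1)–(3) of `FullGeom.BarPhi`. -/

theorem exists_bar_phi (n : ℕ) (hn : 1 ≤ n) (D : FullGeom n)
    (hrel : D.RelAcyclic) (habs : D.AbsAcyclic) (hsph : D.SphereBoundary)
    (hsurj : D.ResSurj) :
    ∃ φb : GCT D.GM D.Fm, D.BarPhi φb := by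
  classical
  obtain ⟨m, rfl⟩ : ∃ m, n = m + 1 := ⟨n - 1, by omega⟩
  obtain ⟨β, hβ'⟩ := habs.2
  have hβ : D.dF m β = D.ωM := hβ' rfl
  have hinv := D.chain_inv hrel habs β hβ
  have esub : ∀ k l : ℕ, k + l = m → m - k = l := fun k l h => by omega
  set Φ : GCT D.GM D.Fm := fun k l =>
    if h : k + l = m then
      (fun g => cast (congrArg D.Fm (esub k l h)) (D.chainC β k g))
    else 0 with hΦ
  have hΦpos : ∀ (k l : ℕ) (h : k + l = m) (g : Fin k → D.GM),
      Φ k l g = cast (congrArg D.Fm (esub k l h)) (D.chainC β k g) := by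
    intro k l h g
    rw [hΦ]
    simp only [dif_pos h]
  have hΦneg : ∀ k l : ℕ, k + l ≠ m → Φ k l = 0 := by
    intro k l h
    rw [hΦ]
    simp only [dif_neg h]
  -- basic reductions of the differentials
  have hDh0 : ∀ l, Dh D.pull Φ 0 l = 0 := fun _ => rfl
  have hDhS : ∀ k l, Dh D.pull Φ (k + 1) l = gdel D.pull k l (Φ k l) := fun _ _ => rfl
  have hDv0 : ∀ k, Dv D.dF Φ k 0 = 0 := fun _ => rfl
  have hDvS : ∀ k l, Dv D.dF Φ k (l + 1) = dvv D.dF k l (Φ k l) := fun _ _ => rfl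
  -- omCM computations
  have homC : ∀ k l : ℕ, ¬(k = 0 ∧ l = m + 1) → D.omCM k l = 0 := by
    intro k l h
    funext g
    show dite (k = 0 ∧ l = m + 1) _ _ = _
    rw [dif_neg h]
    rfl
  have homCpos : D.omCM 0 (m + 1) = fun _ => D.ωM := by
    funext g
    show dite ((0 : ℕ) = 0 ∧ m + 1 = m + 1) _ _ = _
    rw [dif_pos ⟨rfl, rfl⟩]
    exact eq_of_heq (cast_heq _ _)
  refine ⟨Φ, ?_, ?_, ?_, ?_⟩
  · -- IsDeg
    intro k l hkl
    exact hΦneg k l (by omega)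
  · -- the total differential equation
    funext k l
    show Dh D.pull Φ k l + Dv D.dF Φ k l
        = D.omCM k l + (if k = m + 1 ∧ l = 0 then Dh D.pull Φ k l else 0)
    rcases k with _ | k'
    · rcases l with _ | l'
      · rw [hDh0, hDv0, homC 0 0 (by omega), if_neg (by omega)]
      · rw [hDh0, hDvS, if_neg (by omega), zero_add, add_zero]
        by_cases hl : l' = m
        · rw [hl, homCpos]
          funext g
          show ((-1 : ℝ)) ^ (0 : ℕ) • D.dF m (Φ 0 m g) = D.ωM
          have h0 : Φ 0 m g = β := by
            rw [hΦpos 0 m (by omega) g]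
            exact eq_of_heq (cast_heq _ _)
          rw [h0, pow_zero, one_smul, hβ]
        · rw [homC 0 (l' + 1) (by omega), hΦneg 0 l' (by omega), dvv_zero]
    · rcases l with _ | l'
      · rw [hDhS, hDv0, homC (k' + 1) 0 (by omega), add_zero, zero_add]
        by_cases hk : k' = m
        · rw [hk, if_pos ⟨rfl, rfl⟩]
        · rw [if_neg (by omega), hΦneg k' 0 (by omega), gdel_zero]
      · rw [hDhS, hDvS, homC (k' + 1) (l' + 1) (by omega), if_neg (by omega), add_zero]
        by_cases hKL : k' + l' + 1 = m
        · obtain rfl : l' = m - (k' + 1) := by omega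
          have hk'm : k' < m := by omega
          have e1 : m - k' = m - (k' + 1) + 1 := by omega
          have h1 : Φ k' (m - (k' + 1) + 1)
              = fun g => cast (congrArg D.Fm e1) (D.chainC β k' g) := by
            funext g
            rw [hΦpos k' (m - (k' + 1) + 1) (by omega) g]
          rw [h1, gdel_cast D.pull e1 k' (D.chainC β k')]
          have hlink := ((hinv k' (by omega)).2.2.2 hk'm).1 e1.symm
          funext g
          show cast (congrArg D.Fm e1) (gdel D.pull k' (m - k') (D.chainC β k') g)
              + ((-1 : ℝ)) ^ (k' + 1) • D.dF (m - (k' + 1)) (Φ (k' + 1) (m - (k' + 1)) g)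
              = 0
          have h2 : Φ (k' + 1) (m - (k' + 1)) g = D.chainC β (k' + 1) g := by
            rw [hΦpos (k' + 1) (m - (k' + 1)) (by omega) g]
            exact eq_of_heq (cast_heq _ _)
          have hd : D.dF (m - (k' + 1)) (D.chainC β (k' + 1) g)
              = cast (congrArg D.Fm e1)
                  (((-1 : ℝ)) ^ k' • gdel D.pull k' (m - k') (D.chainC β k') g) := by
            rw [← hlink g, cast_cast]
            exact (eq_of_heq (cast_heq _ _)).symm
          rw [h2, hd, D.fcast_smul e1, smul_smul]
          have h3 : ((-1 : ℝ)) ^ (k' + 1) * (-1) ^ k' = -1 := by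
            rw [← pow_add]
            exact Odd.neg_one_pow ⟨k', by ring⟩
          rw [h3, neg_one_smul, add_neg_cancel]
        · rw [hΦneg k' (l' + 1) (by omega), hΦneg (k' + 1) l' (by omega), gdel_zero,
            dvv_zero, add_zero]
  · -- vanishing of the boundary restriction on Diff(M, ∂M)
    intro k l hl g hgrel
    by_cases h : k + l = m
    · have hk : 1 ≤ k := by omega
      rw [hΦpos k l h g, D.res_cast (esub k l h)]
      rw [(hinv k (by omega)).2.2.1 hk g (fun i => D.rHom_Grel _ (hgrel i))]
      exact D.bcast_zero (esub k l h)
    · rw [hΦneg k l h]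
      simp
  · -- the boundary restriction only depends on the boundary behaviour
    intro k l hl g g' hgg
    by_cases h : k + l = m
    · rw [hΦpos k l h g, hΦpos k l h g', D.res_cast (esub k l h),
        D.res_cast (esub k l h)]
      exact congrArg _ ((hinv k (by omega)).2.1 g g' hgg)
    · rw [hΦneg k l h]
      simp

end TsuboiEuler
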